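/- For every β > 0, one has L_Q^{−β} ∘ P_Q = Q⁻¹ ∘ (Q ∘ Tₕ)^β as linear maps from H to V, where Q⁻¹ : W → V is the inverse of Q onto its range (note that (Q ∘ Tₕ)^β maps H into W). In particular, the lumped-mass fractional box discretization L_Q^{−β} ∘ P_Q is determined by the nonfractional box solution operator Tₕ alone. -/

import Mathlib

open ComplexInnerProductSpace

/-- Lumped-mass characterization of the fractional box discretization.
`H` is a complex Hilbert space, `V, W` finite-dimensional subspaces of equal dimension,
`Q : V → H` injective with range `W`.  `V` carries the lumped-mass inner product
`⟨χ,ψ⟩_Q = ⟪Qχ, Qψ⟫`.  `L` is the discrete operator, positive and selfadjoint for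
`⟨·,·⟩_Q` (these properties are expressed through `Q`), `P` the lumped-mass load
operator with `⟨P f, χ⟩_Q = ⟪f, Qχ⟫`, and `T = L⁻¹ ∘ P` the nonfractional box solution
operator.  For `β > 0`, `Lnegβ = L^{-β}` is the spectral fractional power of `L` on
`(V, ⟨·,·⟩_Q)` (characterized on eigenvectors by `μ ↦ μ^{-β}`) and
`Sβ = (Q ∘ T)^β` the continuous-functional-calculus power of the nonnegative
selfadjoint finite-rank operator `Q ∘ T` on `H` (characterized on eigenvectors by
`μ ↦ μ^β`, vanishing on the kernel).  Then `L^{-β} ∘ P = Q⁻¹ ∘ (Q ∘ T)^β`, i.e.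
`Q (L^{-β} (P f)) = (Q ∘ T)^β f` for all `f ∈ H`; in particular `(Q ∘ T)^β` maps `H`
into `W` and the lumped-mass fractional box discretization is determined by `T` alone. -/
theorem stmt7
    {H : Type*} [NormedAddCommGroup H] [InnerProductSpace ℂ H]
    (V W : Submodule ℂ H) [FiniteDimensional ℂ V] [FiniteDimensional ℂ W]
    (hdim : Module.finrank ℂ V = Module.finrank ℂ W)
    (Q : V →ₗ[ℂ] H) (hQinj : Function.Injective Q)
    (hQrange : LinearMap.range Q = W)
    (L : V →ₗ[ℂ] V)
    (hL_herm : ∀ χ ψ : V, ⟪Q (L χ), Q ψ⟫ = ⟪Q χ, Q (L ψ)⟫)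
    (hL_pos : ∀ χ : V, χ ≠ 0 → 0 < (⟪Q (L χ), Q χ⟫).re)
    (P : H →ₗ[ℂ] V)
    (hP : ∀ (f : H) (χ : V), ⟪Q (P f), Q χ⟫ = ⟪f, Q χ⟫)
    (T : H →ₗ[ℂ] V) (hT : ∀ f : H, L (T f) = P f)
    (β : ℝ) (hβ : 0 < β)
    (Lnegβ : V →ₗ[ℂ] V)
    (hLnegβ : ∀ (μ : ℝ) (χ : V), L χ = (μ : ℂ) • χ → Lnegβ χ = ((μ ^ (-β) : ℝ) : ℂ) • χ)
    (Sβ : H →ₗ[ℂ] H)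
    (hSβ : ∀ (μ : ℝ) (f : H), Q (T f) = (μ : ℂ) • f → Sβ f = ((μ ^ β : ℝ) : ℂ) • f) :
    ∀ f : H, (Q (Lnegβ (P f)) : H) = Sβ f := by
  classical
  -- basic consequences of injectivity of Q
  have hQzero : ∀ χ : V, Q χ = 0 → χ = 0 := fun χ h => hQinj (by simpa using h)
  have hQext : ∀ χ : V, (∀ φ : V, ⟪Q χ, Q φ⟫ = 0) → χ = 0 := by
    intro χ h
    exact hQzero χ (inner_self_eq_zero.mp (h χ))
  have hPQ : ∀ χ : V, P (Q χ) = χ := by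
    intro χ
    have h : ∀ φ : V, ⟪Q (P (Q χ) - χ), Q φ⟫ = 0 := by
      intro φ
      rw [map_sub, inner_sub_left, hP, sub_eq_zero]
    exact sub_eq_zero.mp (hQext _ h)
  have hLinj : Function.Injective L := by
    intro χ ψ h
    by_contra hne
    have hχψ : χ - ψ ≠ 0 := sub_ne_zero.mpr hne
    have hpos := hL_pos (χ - ψ) hχψ
    have h0 : L (χ - ψ) = 0 := by rw [map_sub, h, sub_self]
    rw [h0] at hpos
    simp at hpos
  -- the linear equivalence V ≃ W induced by Q
  let e₁ : V ≃ₗ[ℂ] LinearMap.range Q := LinearEquiv.ofInjective Q hQinj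
  let e₂ : (LinearMap.range Q : Submodule ℂ H) ≃ₗ[ℂ] W := LinearEquiv.ofEq _ _ hQrange
  let eV : V ≃ₗ[ℂ] W := e₁.trans e₂
  have heV : ∀ χ : V, ((eV χ : W) : H) = Q χ := fun χ => rfl
  have heVsymm : ∀ w : W, Q (eV.symm w) = (w : H) := by
    intro w
    rw [← heV]
    simp
  -- the conjugated operator on W
  let M : W →ₗ[ℂ] W := (eV.conj L)
  have hM_apply : ∀ w : W, M w = eV (L (eV.symm w)) := by
    intro w; simp [M, LinearEquiv.conj_apply]
  have hM_symm : (M : W →ₗ[ℂ] W).IsSymmetric := by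
    intro x y
    have hx : ((M x : W) : H) = Q (L (eV.symm x)) := by rw [hM_apply, heV]
    have hy : ((M y : W) : H) = Q (L (eV.symm y)) := by rw [hM_apply, heV]
    rw [Submodule.coe_inner, Submodule.coe_inner, hx, hy, ← heVsymm x, ← heVsymm y]
    exact hL_herm _ _
  set n := Module.finrank ℂ W with hn
  obtain b := hM_symm.eigenvectorBasis rfl
  set μ : Fin n → ℝ := hM_symm.eigenvalues rfl with hμdef
  set b : OrthonormalBasis (Fin n) ℂ W := hM_symm.eigenvectorBasis rfl with hbdef
  have hMb : ∀ i, M (b i) = (μ i : ℂ) • b i := fun i => hM_symm.apply_eigenvectorBasis rfl i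
  -- the eigenvectors pulled back to V
  set ε : Fin n → V := fun i => eV.symm (b i) with hεdef
  have hQε : ∀ i, Q (ε i) = (b i : H) := fun i => heVsymm (b i)
  have hLε : ∀ i, L (ε i) = (μ i : ℂ) • ε i := by
    intro i
    have h1 := hMb i
    rw [hM_apply] at h1
    have h2 := congrArg eV.symm h1
    rw [eV.symm_apply_apply, map_smul] at h2
    exact h2
  have hεne : ∀ i, ε i ≠ 0 := by
    intro i h
    have hb0 : (b i : W) = 0 := by
      have h2 : (b i : W) = eV (ε i) := (eV.apply_symm_apply (b i)).symm
      rw [h2, h, map_zero]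
    exact (b.toBasis.ne_zero i) (by simpa using hb0)
  -- positivity of the eigenvalues
  have hμpos : ∀ i, 0 < μ i := by
    intro i
    have hpos := hL_pos (ε i) (hεne i)
    rw [hLε i] at hpos
    have hnorm : ⟪Q (ε i), Q (ε i)⟫ = 1 := by
      rw [hQε, ← Submodule.coe_inner]
      have hb1 := b.orthonormal.1 i
      rw [@inner_self_eq_norm_sq_to_K ℂ, hb1]
      norm_num
    rw [map_smul, inner_smul_left, hnorm] at hpos
    simpa using hpos
  -- eigenvector relations for Lnegβ and Sβ
  have hLnegβε : ∀ i, Lnegβ (ε i) = ((μ i ^ (-β) : ℝ) : ℂ) • ε i := fun i =>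
    hLnegβ (μ i) (ε i) (hLε i)
  have hTQε : ∀ i, T (Q (ε i)) = (((μ i)⁻¹ : ℝ) : ℂ) • ε i := by
    intro i
    apply hLinj
    rw [hT, hPQ, map_smul, hLε, smul_smul]
    rw [← Complex.ofReal_mul, inv_mul_cancel₀ (hμpos i).ne']
    simp
  have hSβQε : ∀ i, Sβ (Q (ε i)) = ((μ i ^ (-β) : ℝ) : ℂ) • Q (ε i) := by
    intro i
    have h : Q (T (Q (ε i))) = ((((μ i)⁻¹ : ℝ)) : ℂ) • Q (ε i) := by
      rw [hTQε, map_smul]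
    have := hSβ ((μ i)⁻¹) (Q (ε i)) h
    rwa [Real.inv_rpow (hμpos i).le, ← Real.rpow_neg (hμpos i).le] at this
  -- behavior on the orthogonal complement of W
  have hSβ_orth : ∀ f : H, f ∈ Wᗮ → Sβ f = 0 ∧ P f = 0 := by
    intro f hf
    have hPf : P f = 0 := by
      apply hQext
      intro φ
      rw [hP]
      refine Submodule.inner_left_of_mem_orthogonal ?_ hf
      rw [← hQrange]; exact LinearMap.mem_range_self Q φ
    have hTf : T f = 0 := hLinj (by rw [hT, hPf, map_zero])
    have hS : Sβ f = 0 := by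
      have h : Q (T f) = ((0 : ℝ) : ℂ) • f := by rw [hTf]; simp
      have := hSβ 0 f h
      rwa [Real.zero_rpow hβ.ne', Complex.ofReal_zero, zero_smul] at this
    exact ⟨hS, hPf⟩
  -- main computation
  intro f
  set g : W := W.orthogonalProjectionOnto f with hg
  have hf_split : f = (g : H) + (f - (g : H)) := by abel
  have hforth : f - (g : H) ∈ Wᗮ := W.sub_starProjection_mem_orthogonal f
  obtain ⟨hS0, hP0⟩ := hSβ_orth _ hforth
  have key : (Q (Lnegβ (P (g : H))) : H) = Sβ (g : H) := by
    have hrepr : (g : H) = ∑ i, b.repr g i • (Q (ε i)) := by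
      conv_lhs => rw [← b.sum_repr g]
      push_cast
      simp [hQε]
    rw [hrepr]
    rw [map_sum, map_sum, map_sum, map_sum]
    congr 1
    ext i
    rw [map_smul, map_smul, map_smul, map_smul, hPQ, hLnegβε, map_smul, hSβQε]
  calc (Q (Lnegβ (P f)) : H)
      = Q (Lnegβ (P ((g : H) + (f - (g : H))))) := by rw [← hf_split]
    _ = Q (Lnegβ (P (g : H))) := by rw [map_add, hP0, add_zero]
    _ = Sβ (g : H) := key
    _ = Sβ f := by
        conv_rhs => rw [hf_split]
        rw [map_add, hS0, add_zero]
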